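/- Let μ be a distribution over [q]^E satisfying the conditional independence property for the line graph of G = (V,E). Then for any f : Ω(μ) → ℝ and any S, T ⊆ E with ∂S ∩ T = ∅ (where ∂S is the set of edges outside S adjacent to S), the conditional expectations commute: μ_S μ_T f = μ_T μ_S f. -/

import Mathlib

set_option maxHeartbeats 1000000


open scoped Classical

/-- Conditional expectation of `f` under `μ`, resampling the coordinates in `S`
given that the coordinates outside `S` are fixed to those of `σ`. -/
noncomputable def cExp {ι : Type*} [Fintype ι] [DecidableEq ι] {q : ℕ}
    (μ : (ι → Fin q) → ℝ) (f : (ι → Fin q) → ℝ) (S : Finset ι) (σ : ι → Fin q) : ℝ :=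
  (∑ τ, if ∀ i ∉ S, τ i = σ i then μ τ * f τ else 0) /
    (∑ τ, if ∀ i ∉ S, τ i = σ i then μ τ else 0)

/-- The line graph of `G`: vertices are the edges of `G`, two distinct edges being
adjacent when they share an endpoint. -/
def lineG {V : Type*} [Fintype V] [DecidableEq V] (G : SimpleGraph V) [DecidableRel G.Adj] :
    SimpleGraph ↥G.edgeFinset :=
  SimpleGraph.fromRel (fun e e' => ∃ v, v ∈ (e : Sym2 V) ∧ v ∈ (e' : Sym2 V))

namespace Stmt11Aux

variable {ι : Type*} [Fintype ι] [DecidableEq ι] {q : ℕ}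

noncomputable def Sm (g : (ι → Fin q) → ℝ) (W : Finset ι) (θ : ι → Fin q) : ℝ :=
  ∑ τ, if ∀ i ∉ W, τ i = θ i then g τ else 0

lemma Sm_def (g : (ι → Fin q) → ℝ) (W : Finset ι) (θ : ι → Fin q) :
    Sm g W θ = ∑ τ, if ∀ i ∉ W, τ i = θ i then g τ else 0 := rfl

lemma Sm_congr {g g' : (ι → Fin q) → ℝ} {W : Finset ι} {θ : ι → Fin q}
    (h : ∀ a, (∀ i ∉ W, a i = θ i) → g a = g' a) : Sm g W θ = Sm g' W θ := by
  unfold Sm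
  refine Finset.sum_congr rfl fun τ _ => ?_
  split_ifs with hc
  · exact h τ hc
  · rfl

lemma Sm_base {g : (ι → Fin q) → ℝ} {W : Finset ι} {θ θ' : ι → Fin q}
    (h : ∀ i ∉ W, θ i = θ' i) : Sm g W θ = Sm g W θ' := by
  unfold Sm
  refine Finset.sum_congr rfl fun τ _ => ?_
  refine if_congr ⟨fun hc i hi => (hc i hi).trans (h i hi),
    fun hc i hi => (hc i hi).trans (h i hi).symm⟩ rfl rfl

lemma Sm_mul_const (g : (ι → Fin q) → ℝ) (c : ℝ) (W : Finset ι) (θ : ι → Fin q) :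
    Sm (fun b => g b * c) W θ = Sm g W θ * c := by
  unfold Sm
  rw [Finset.sum_mul]
  refine Finset.sum_congr rfl fun τ _ => ?_
  split_ifs <;> simp

lemma Sm_pos {μ : (ι → Fin q) → ℝ} (hnn : ∀ τ, 0 ≤ μ τ) {W : Finset ι} {θ : ι → Fin q}
    (h : 0 < μ θ) : 0 < Sm μ W θ := by
  unfold Sm
  refine Finset.sum_pos' (fun τ _ => ?_) ⟨θ, Finset.mem_univ θ, ?_⟩
  · split_ifs
    exacts [hnn τ, le_refl 0]
  · rw [if_pos (fun i _ => rfl)]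
    exact h

lemma Sm_zero {μ f : (ι → Fin q) → ℝ} (hnn : ∀ τ, 0 ≤ μ τ) {W : Finset ι} {θ : ι → Fin q}
    (h : Sm μ W θ = 0) : Sm (fun τ => μ τ * f τ) W θ = 0 := by
  unfold Sm at h ⊢
  have hz := (Finset.sum_eq_zero_iff_of_nonneg
    (fun τ _ => by split_ifs; exacts [hnn τ, le_rfl])).1 h
  refine Finset.sum_eq_zero fun τ _ => ?_
  split_ifs with hc
  · have h0 := hz τ (Finset.mem_univ τ)
    rw [if_pos hc] at h0
    show μ τ * f τ = 0
    rw [h0, zero_mul]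
  · rfl

lemma Sm_split {g : (ι → Fin q) → ℝ} {W₁ W₂ : Finset ι} (hd : Disjoint W₁ W₂)
    (θ : ι → Fin q) : Sm g (W₁ ∪ W₂) θ = Sm (fun a => Sm g W₂ a) W₁ θ := by
  simp only [Sm]
  have key : ∀ a b : ι → Fin q,
      ((∀ i ∉ W₁, a i = θ i) ∧ (∀ i ∉ W₂, b i = a i)) ↔
      (a = (fun i => if i ∈ W₂ then θ i else b i) ∧ ∀ i ∉ W₁ ∪ W₂, b i = θ i) := by
    intro a b
    constructor
    · rintro ⟨h1, h2⟩
      constructor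
      · funext i
        by_cases hi : i ∈ W₂
        · simp only [if_pos hi]
          exact h1 i (Finset.disjoint_right.1 hd hi)
        · simp only [if_neg hi]
          exact (h2 i hi).symm
      · intro i hi
        rw [Finset.mem_union] at hi
        push_neg at hi
        exact (h2 i hi.2).trans (h1 i hi.1)
    · rintro ⟨rfl, hR⟩
      constructor
      · intro i hi
        by_cases hi2 : i ∈ W₂
        · simp [hi2]
        · simp only [if_neg hi2]
          exact hR i (by simp [Finset.mem_union, hi, hi2])
      · intro i hi
        simp [hi]
  set F : (ι → Fin q) → (ι → Fin q) → ℝ :=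
    fun a b => if (∀ i ∉ W₁, a i = θ i) ∧ (∀ i ∉ W₂, b i = a i) then g b else 0 with hF
  have h1 : (∑ τ, if ∀ i ∉ W₁ ∪ W₂, τ i = θ i then g τ else 0) = ∑ b, ∑ a, F a b := by
    refine Finset.sum_congr rfl fun b _ => ?_
    rw [hF]
    rw [Finset.sum_congr rfl fun a (_ : a ∈ Finset.univ) => if_congr (key a b) rfl rfl]
    by_cases hR : ∀ i ∉ W₁ ∪ W₂, b i = θ i
    · rw [if_pos hR,
        Finset.sum_congr rfl fun a (_ : a ∈ Finset.univ) => if_congr (and_iff_left hR) rfl rfl,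
        Finset.sum_ite_eq' Finset.univ (fun i => if i ∈ W₂ then θ i else b i) (fun _ => g b),
        if_pos (Finset.mem_univ _)]
    · rw [if_neg hR]
      exact (Finset.sum_eq_zero fun a _ => if_neg (fun hc => hR hc.2)).symm
  have h2 : (∑ b, ∑ a, F a b) = ∑ a, ∑ b, F a b := Finset.sum_comm
  have h3 : (∑ a, ∑ b, F a b) = ∑ a : ι → Fin q, if ∀ i ∉ W₁, a i = θ i then
      (∑ b : ι → Fin q, if ∀ i ∉ W₂, b i = a i then g b else 0) else 0 := by
    refine Finset.sum_congr rfl fun a _ => ?_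
    rw [hF]
    by_cases h : ∀ i ∉ W₁, a i = θ i
    · rw [if_pos h]
      exact Finset.sum_congr rfl fun b _ => if_congr (and_iff_right h) rfl rfl
    · rw [if_neg h]
      exact Finset.sum_eq_zero fun b _ => if_neg (fun hc => h hc.1)
  exact h1.trans (h2.trans h3)

lemma cExp_eq (μ f : (ι → Fin q) → ℝ) (W : Finset ι) (σ : ι → Fin q) :
    cExp μ f W σ = Sm (fun τ => μ τ * f τ) W σ / Sm μ W σ := rfl

lemma main (μ : (ι → Fin q) → ℝ) (hnn : ∀ τ, 0 ≤ μ τ) (S T : Finset ι)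
    (f : (ι → Fin q) → ℝ) (σ : ι → Fin q) (hσ : 0 < μ σ)
    (hci : ∀ a : ι → Fin q, (∀ i ∉ S \ T, a i = σ i) →
      Sm μ (S ∩ T) a * Sm μ (S ∪ T) σ = Sm μ T a * Sm μ S σ) :
    cExp μ (fun τ => cExp μ f T τ) S σ = cExp μ f (S ∪ T) σ := by
  have hUpos : 0 < Sm μ (S ∪ T) σ := Sm_pos hnn hσ
  have hSpos : 0 < Sm μ S σ := Sm_pos hnn hσ
  have hPQ : S \ T ∪ S ∩ T = S := Finset.sdiff_union_inter S T
  have hPT : S \ T ∪ T = S ∪ T := Finset.sdiff_union_self_eq_union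
  have hdPQ : Disjoint (S \ T) (S ∩ T) := Finset.disjoint_sdiff_inter S T
  have hdPT : Disjoint (S \ T) T := Finset.sdiff_disjoint
  have inner : ∀ a : ι → Fin q, (∀ i ∉ S \ T, a i = σ i) →
      Sm (fun b => μ b * cExp μ f T b) (S ∩ T) a
        = Sm (fun τ => μ τ * f τ) T a * (Sm μ S σ / Sm μ (S ∪ T) σ) := by
    intro a ha
    have h1 : Sm (fun b => μ b * cExp μ f T b) (S ∩ T) a
        = Sm (fun b => μ b * cExp μ f T a) (S ∩ T) a := by
      refine Sm_congr fun b hb => ?_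
      have hba : ∀ i ∉ T, b i = a i :=
        fun i hi => hb i (fun hq => hi (Finset.mem_of_mem_inter_right hq))
      rw [cExp_eq, cExp_eq, Sm_base (g := fun τ => μ τ * f τ) hba, Sm_base (g := μ) hba]
    rw [h1, Sm_mul_const]
    have hq := hci a ha
    rcases eq_or_ne (Sm μ T a) 0 with h0 | h0
    · have hν0 : Sm (fun τ => μ τ * f τ) T a = 0 := Sm_zero hnn h0
      have hQ0 : Sm μ (S ∩ T) a = 0 := by
        rw [h0, zero_mul] at hq
        exact (mul_eq_zero.mp hq).resolve_right hUpos.ne'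
      rw [hQ0, hν0, zero_mul, zero_mul]
    · rw [cExp_eq]
      have hQ : Sm μ (S ∩ T) a = Sm μ T a * Sm μ S σ / Sm μ (S ∪ T) σ := by
        rw [eq_div_iff hUpos.ne']
        exact hq
      rw [hQ]
      field_simp
  have hnum : Sm (fun τ => μ τ * cExp μ f T τ) S σ
      = Sm (fun τ => μ τ * f τ) (S ∪ T) σ * (Sm μ S σ / Sm μ (S ∪ T) σ) := by
    calc Sm (fun τ => μ τ * cExp μ f T τ) S σ
        = Sm (fun τ => μ τ * cExp μ f T τ) (S \ T ∪ S ∩ T) σ := by rw [hPQ]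
      _ = Sm (fun a => Sm (fun b => μ b * cExp μ f T b) (S ∩ T) a) (S \ T) σ :=
          Sm_split hdPQ σ
      _ = Sm (fun a => Sm (fun τ => μ τ * f τ) T a * (Sm μ S σ / Sm μ (S ∪ T) σ)) (S \ T) σ :=
          Sm_congr inner
      _ = Sm (fun a => Sm (fun τ => μ τ * f τ) T a) (S \ T) σ * (Sm μ S σ / Sm μ (S ∪ T) σ) :=
          Sm_mul_const _ _ _ _
      _ = Sm (fun τ => μ τ * f τ) (S \ T ∪ T) σ * (Sm μ S σ / Sm μ (S ∪ T) σ) := by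
          rw [← Sm_split hdPT]
      _ = Sm (fun τ => μ τ * f τ) (S ∪ T) σ * (Sm μ S σ / Sm μ (S ∪ T) σ) := by rw [hPT]
  rw [cExp_eq, cExp_eq, hnum]
  field_simp

end Stmt11Aux

open Stmt11Aux

/-- Commutation of conditional expectations when `∂S ∩ T = ∅`:
if `μ` is a distribution over `[q]^E` satisfying the conditional independence property
for the line graph of `G`, and `S, T ⊆ E` are such that no edge of the exterior boundary
`∂S = {e ∉ S : ∃ h ∈ S, e ∼ h}` lies in `T`, then `μ_S μ_T f = μ_T μ_S f` on the support
of `μ`. -/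
theorem statement11 {V : Type*} [Fintype V] [DecidableEq V]
    (G : SimpleGraph V) [DecidableRel G.Adj] (q : ℕ)
    (μ : (↥G.edgeFinset → Fin q) → ℝ)
    (hnn : ∀ σ, 0 ≤ μ σ) (hsum : ∑ σ, μ σ = 1)
    (hCI : ∀ A B C : Finset ↥G.edgeFinset,
      Disjoint A B → Disjoint A C → Disjoint B C →
      (∀ a ∈ A, ∀ b ∈ B, ∀ w : (lineG G).Walk a b, ∃ c ∈ C, c ∈ w.support) →
      ∀ η : ↥G.edgeFinset → Fin q,
        0 < (∑ τ, if ∀ i ∈ C, τ i = η i then μ τ else 0) →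
        ∀ ζ : ↥G.edgeFinset → Fin q,
          (∑ τ, if (∀ i ∈ A ∪ B, τ i = ζ i) ∧ (∀ i ∈ C, τ i = η i) then μ τ else 0)
              / (∑ τ, if ∀ i ∈ C, τ i = η i then μ τ else 0)
            = ((∑ τ, if (∀ i ∈ A, τ i = ζ i) ∧ (∀ i ∈ C, τ i = η i) then μ τ else 0)
              / (∑ τ, if ∀ i ∈ C, τ i = η i then μ τ else 0))
            * ((∑ τ, if (∀ i ∈ B, τ i = ζ i) ∧ (∀ i ∈ C, τ i = η i) then μ τ else 0)
              / (∑ τ, if ∀ i ∈ C, τ i = η i then μ τ else 0)))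
    (S T : Finset ↥G.edgeFinset)
    (hbd : ∀ e, (e ∉ S ∧ ∃ h ∈ S, (lineG G).Adj e h) → e ∉ T)
    (f : (↥G.edgeFinset → Fin q) → ℝ) :
    ∀ σ, 0 < μ σ →
      cExp μ (fun τ => cExp μ f T τ) S σ = cExp μ (fun τ => cExp μ f S τ) T σ := by
  intro σ hσ
  -- separation lemma
  have sep : ∀ {x y : ↥G.edgeFinset} (w : (lineG G).Walk x y), x ∈ S → y ∉ S →
      ∃ c, c ∈ w.support ∧ c ∉ S ∧ c ∉ T := by
    intro x y w
    induction w with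
    | nil => exact fun hx hy => absurd hx hy
    | @cons u v z huv p ih =>
      intro hu hz
      by_cases hv : v ∈ S
      · obtain ⟨c, hc1, hc2⟩ := ih hv hz
        exact ⟨c, by simp only [SimpleGraph.Walk.support_cons, List.mem_cons]; exact Or.inr hc1,
          hc2⟩
      · refine ⟨v, ?_, hv, hbd v ⟨hv, u, hu, huv.symm⟩⟩
        simp only [SimpleGraph.Walk.support_cons, List.mem_cons]
        exact Or.inr p.start_mem_support
  -- derive the conditional-independence identity used in `main`, for a pair of sets X, Y
  -- such that every walk from X \ Y to Y \ X meets (X ∪ Y)ᶜ.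
  have key : ∀ X Y : Finset ↥G.edgeFinset,
      (∀ a ∈ X \ Y, ∀ b ∈ Y \ X, ∀ w : (lineG G).Walk a b, ∃ c ∈ (X ∪ Y)ᶜ, c ∈ w.support) →
      ∀ a : ↥G.edgeFinset → Fin q, (∀ i ∉ X \ Y, a i = σ i) →
      Sm μ (X ∩ Y) a * Sm μ (X ∪ Y) σ = Sm μ Y a * Sm μ X σ := by
    intro X Y hw a ha
    have d1 : Disjoint (X \ Y) (Y \ X) := disjoint_sdiff_sdiff
    have d2 : Disjoint (X \ Y) (X ∪ Y)ᶜ := by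
      rw [Finset.disjoint_left]
      intro i hi hic
      exact (Finset.mem_compl.1 hic) (Finset.mem_union_left _ (Finset.mem_sdiff.1 hi).1)
    have d3 : Disjoint (Y \ X) (X ∪ Y)ᶜ := by
      rw [Finset.disjoint_left]
      intro i hi hic
      exact (Finset.mem_compl.1 hic) (Finset.mem_union_right _ (Finset.mem_sdiff.1 hi).1)
    have eZ : (∑ τ, if ∀ i ∈ (X ∪ Y)ᶜ, τ i = σ i then μ τ else 0) = Sm μ (X ∪ Y) σ := by
      rw [Sm_def]
      refine Finset.sum_congr rfl fun τ _ => if_congr ?_ rfl rfl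
      constructor
      · exact fun h i hi => h i (Finset.mem_compl.2 hi)
      · exact fun h i hi => h i (Finset.mem_compl.1 hi)
    have hZ : 0 < (∑ τ, if ∀ i ∈ (X ∪ Y)ᶜ, τ i = σ i then μ τ else 0) := by
      rw [eZ]; exact Sm_pos hnn hσ
    have h := hCI (X \ Y) (Y \ X) ((X ∪ Y)ᶜ) d1 d2 d3 hw σ hZ a
    -- rewrite the three event sums
    have eAB : (∑ τ, if (∀ i ∈ (X \ Y) ∪ (Y \ X), τ i = a i) ∧ (∀ i ∈ (X ∪ Y)ᶜ, τ i = σ i)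
        then μ τ else 0) = Sm μ (X ∩ Y) a := by
      rw [Sm_def]
      refine Finset.sum_congr rfl fun τ _ => if_congr ?_ rfl rfl
      constructor
      · rintro ⟨h1, h2⟩ i hi
        by_cases hiX : i ∈ X
        · exact h1 i (Finset.mem_union_left _ (Finset.mem_sdiff.2
            ⟨hiX, fun hY => hi (Finset.mem_inter.2 ⟨hiX, hY⟩)⟩))
        · by_cases hiY : i ∈ Y
          · exact h1 i (Finset.mem_union_right _ (Finset.mem_sdiff.2 ⟨hiY, hiX⟩))
          · have h3 : τ i = σ i := h2 i (Finset.mem_compl.2 (by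
              simp [Finset.mem_union, hiX, hiY]))
            have h4 : a i = σ i := ha i (fun hc => hiX (Finset.mem_sdiff.1 hc).1)
            rw [h3, h4]
      · intro h1
        constructor
        · intro i hi
          rcases Finset.mem_union.1 hi with hi' | hi'
          · exact h1 i (fun hc => (Finset.mem_sdiff.1 hi').2 (Finset.mem_inter.1 hc).2)
          · exact h1 i (fun hc => (Finset.mem_sdiff.1 hi').2 (Finset.mem_inter.1 hc).1)
        · intro i hi
          have hiU := Finset.mem_compl.1 hi
          have h2 : τ i = a i := h1 i (fun hc => hiU (Finset.mem_union_left _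
            (Finset.mem_inter.1 hc).1))
          have h3 : a i = σ i := ha i (fun hc => hiU (Finset.mem_union_left _
            (Finset.mem_sdiff.1 hc).1))
          rw [h2, h3]
    have eA : (∑ τ, if (∀ i ∈ X \ Y, τ i = a i) ∧ (∀ i ∈ (X ∪ Y)ᶜ, τ i = σ i)
        then μ τ else 0) = Sm μ Y a := by
      rw [Sm_def]
      refine Finset.sum_congr rfl fun τ _ => if_congr ?_ rfl rfl
      constructor
      · rintro ⟨h1, h2⟩ i hi
        by_cases hiX : i ∈ X
        · exact h1 i (Finset.mem_sdiff.2 ⟨hiX, hi⟩)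
        · have h3 : τ i = σ i := h2 i (Finset.mem_compl.2 (by
            simp [Finset.mem_union, hiX, hi]))
          have h4 : a i = σ i := ha i (fun hc => hiX (Finset.mem_sdiff.1 hc).1)
          rw [h3, h4]
      · intro h1
        constructor
        · exact fun i hi => h1 i (Finset.mem_sdiff.1 hi).2
        · intro i hi
          have hiU := Finset.mem_compl.1 hi
          have hiY : i ∉ Y := fun hc => hiU (Finset.mem_union_right _ hc)
          have h2 : τ i = a i := h1 i hiY
          have h3 : a i = σ i := ha i (fun hc => hiU (Finset.mem_union_left _
            (Finset.mem_sdiff.1 hc).1))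
          rw [h2, h3]
    have eB : (∑ τ, if (∀ i ∈ Y \ X, τ i = a i) ∧ (∀ i ∈ (X ∪ Y)ᶜ, τ i = σ i)
        then μ τ else 0) = Sm μ X σ := by
      rw [Sm_def]
      refine Finset.sum_congr rfl fun τ _ => if_congr ?_ rfl rfl
      constructor
      · rintro ⟨h1, h2⟩ i hi
        by_cases hiY : i ∈ Y
        · have h2' : τ i = a i := h1 i (Finset.mem_sdiff.2 ⟨hiY, hi⟩)
          have h3 : a i = σ i := ha i (fun hc => hi (Finset.mem_sdiff.1 hc).1)
          rw [h2', h3]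
        · exact h2 i (Finset.mem_compl.2 (by simp [Finset.mem_union, hi, hiY]))
      · intro h1
        constructor
        · intro i hi
          have hiX : i ∉ X := (Finset.mem_sdiff.1 hi).2
          have h2 : τ i = σ i := h1 i hiX
          have h3 : a i = σ i := ha i (fun hc => hiX (Finset.mem_sdiff.1 hc).1)
          rw [h2, h3]
        · intro i hi
          exact h1 i (fun hc => (Finset.mem_compl.1 hi) (Finset.mem_union_left _ hc))
    rw [eAB, eA, eB, eZ] at h
    -- clear denominators
    have hZ' : Sm μ (X ∪ Y) σ ≠ 0 := by rw [← eZ]; exact hZ.ne'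
    rw [div_mul_div_comm, div_eq_div_iff hZ' (mul_ne_zero hZ' hZ')] at h
    have h' : Sm μ (X ∩ Y) a * Sm μ (X ∪ Y) σ * Sm μ (X ∪ Y) σ
        = Sm μ Y a * Sm μ X σ * Sm μ (X ∪ Y) σ := by linear_combination h
    exact mul_right_cancel₀ hZ' h'
  -- walk conditions for the two applications
  have hw1 : ∀ a ∈ S \ T, ∀ b ∈ T \ S, ∀ w : (lineG G).Walk a b,
      ∃ c ∈ (S ∪ T)ᶜ, c ∈ w.support := by
    intro a ha b hb w
    obtain ⟨c, hc1, hc2, hc3⟩ := sep w (Finset.mem_sdiff.1 ha).1 (Finset.mem_sdiff.1 hb).2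
    exact ⟨c, Finset.mem_compl.2 (by simp [Finset.mem_union, hc2, hc3]), hc1⟩
  have hw2 : ∀ a ∈ T \ S, ∀ b ∈ S \ T, ∀ w : (lineG G).Walk a b,
      ∃ c ∈ (T ∪ S)ᶜ, c ∈ w.support := by
    intro a ha b hb w
    obtain ⟨c, hc1, hc2, hc3⟩ := sep w.reverse (Finset.mem_sdiff.1 hb).1
      (Finset.mem_sdiff.1 ha).2
    rw [SimpleGraph.Walk.support_reverse, List.mem_reverse] at hc1
    exact ⟨c, Finset.mem_compl.2 (by simp [Finset.mem_union, hc2, hc3]), hc1⟩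
  have hciS := key S T hw1
  have hciT := key T S hw2
  rw [main μ hnn S T f σ hσ hciS, main μ hnn T S f σ hσ hciT, Finset.union_comm]
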